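/- With respect to the negative degree reverse lexicographic monomial order on k[z_1,…,z_{r+1}] induced by z_{r+1} > ⋯ > z_1, the set G = {P_1,…,P_r}, where P_i = z_{i+1}^a − z_i^b, is a minimal Gröbner basis of the defining ideal 𝔭 of the monomial curve defined by S; in particular LM(P_i) = z_{i+1}^a for i = 1,…,r. -/

import Mathlib

open MvPolynomial CategoryTheory

set_option maxHeartbeats 1000000
set_option synthInstance.maxHeartbeats 400000

noncomputable section

namespace AffineSG

/-- The total degree of an exponent vector. -/
def edeg {n : ℕ} (u : Fin n →₀ ℕ) : ℕ := u.sum fun _ e => e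

/-- `ndrlGT u v` means that the monomial with exponent vector `u` is strictly greater than
the one with exponent vector `v` in the negative degree reverse lexicographic order induced by
`z_n > ⋯ > z_1` (the variable with larger index is the larger variable). -/
def ndrlGT {n : ℕ} (u v : Fin n →₀ ℕ) : Prop :=
  edeg u < edeg v ∨
    (edeg u = edeg v ∧ ∃ i : Fin n, u i < v i ∧ ∀ j : Fin n, j < i → u j = v j)

/-- `IsLM f m` : the exponent vector `m` is the leading monomial of `f` with respect to the
negative degree reverse lexicographic order. -/
def IsLM {n : ℕ} {k : Type} [Field k] (f : MvPolynomial (Fin n) k) (m : Fin n →₀ ℕ) : Prop :=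
  m ∈ f.support ∧ ∀ m' ∈ f.support, m' ≠ m → ndrlGT m m'

/-- `G` is a Gröbner (standard) basis of `I` with respect to the negative degree reverse
lexicographic order: `G ⊆ I` and the leading monomial of every nonzero element of `I` is
divisible by the leading monomial of some element of `G`. -/
def IsGroebnerBasis {n : ℕ} {k : Type} [Field k] (G : Finset (MvPolynomial (Fin n) k))
    (I : Ideal (MvPolynomial (Fin n) k)) : Prop :=
  (↑G : Set (MvPolynomial (Fin n) k)) ⊆ (I : Set (MvPolynomial (Fin n) k)) ∧
    ∀ f ∈ I, f ≠ 0 → ∃ g ∈ G, ∃ mg mf, IsLM g mg ∧ IsLM f mf ∧ mg ≤ mf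

/-- A minimal Gröbner basis: a Gröbner basis consisting of nonzero polynomials no leading
monomial of which divides the leading monomial of another element. -/
def IsMinimalGroebnerBasis {n : ℕ} {k : Type} [Field k] (G : Finset (MvPolynomial (Fin n) k))
    (I : Ideal (MvPolynomial (Fin n) k)) : Prop :=
  IsGroebnerBasis G I ∧ (0 : MvPolynomial (Fin n) k) ∉ G ∧
    ∀ g ∈ G, ∀ g' ∈ G, g ≠ g' → ∀ mg mg', IsLM g mg → IsLM g' mg' → ¬ mg ≤ mg'

/-- The toric ideal (defining ideal) attached to a family `g` of lattice points in `ℕ^d`: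
the kernel of `z_i ↦ x^{g i}`. -/
def famIdeal (k : Type) [Field k] {n d : ℕ} (g : Fin n → (Fin d → ℕ)) :
    Ideal (MvPolynomial (Fin n) k) :=
  RingHom.ker (MvPolynomial.aeval
    (fun i => MvPolynomial.monomial (Finsupp.equivFunOnFinite.symm (g i)) (1 : k)) :
      MvPolynomial (Fin n) k →ₐ[k] MvPolynomial (Fin d) k)

/-- A simplicial affine semigroup fully embedded in `ℕ^d`, minimally generated by
`gen 0, …, gen (d+r-1)`, whose set of extremal rays consists of the first `d` generators. -/
structure SimplicialAffineSemigroup (d r : ℕ) where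
  gen : Fin (d + r) → (Fin d → ℕ)
  gen_ne_zero : ∀ i, gen i ≠ 0
  li : LinearIndependent ℚ (fun (i : Fin d) (j : Fin d) => ((gen (Fin.castAdd r i) j : ℚ)))
  cone : ∀ i : Fin (d + r), ∃ c : Fin d → ℚ, (∀ j, 0 ≤ c j) ∧
    (fun j => (gen i j : ℚ)) = ∑ j : Fin d, c j • (fun l => (gen (Fin.castAdd r j) l : ℚ))
  minimal : ∀ i, gen i ∉ AddSubmonoid.closure (Set.range gen \ {gen i})

namespace SimplicialAffineSemigroup

variable {d r : ℕ}

/-- The underlying semigroup (as a set): the additive submonoid generated by the generators. -/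
def mem (S : SimplicialAffineSemigroup d r) (s : Fin d → ℕ) : Prop :=
  s ∈ AddSubmonoid.closure (Set.range S.gen)

/-- The defining ideal `I(S)` of the semigroup ring `k[S]`. -/
def definingIdeal (k : Type) [Field k] (S : SimplicialAffineSemigroup d r) :
    Ideal (MvPolynomial (Fin (d + r)) k) :=
  famIdeal k S.gen

end SimplicialAffineSemigroup

/-- The smallest degree of a monomial appearing in `f`. -/
def minDeg {n : ℕ} {k : Type} [Field k] (f : MvPolynomial (Fin n) k) : ℕ :=
  sInf (edeg '' (f.support : Set (Fin n →₀ ℕ)))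

/-- The initial form `f*` of `f`: the homogeneous component of least degree of `f`. -/
def initialForm {n : ℕ} {k : Type} [Field k] (f : MvPolynomial (Fin n) k) :
    MvPolynomial (Fin n) k :=
  MvPolynomial.homogeneousComponent (minDeg f) f

/-- `I*`, the ideal generated by the initial forms of the elements of `I`;
one has `gr_𝔪(A/I) ≅ A/I*`. -/
def starIdeal {n : ℕ} {k : Type} [Field k] (I : Ideal (MvPolynomial (Fin n) k)) :
    Ideal (MvPolynomial (Fin n) k) :=
  Ideal.span { g | ∃ f ∈ I, f ≠ 0 ∧ g = initialForm f }

/-- A finite set `J ⊆ I` is a standard basis of `I` if the initial forms of its elements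
generate `I*`. -/
def IsStandardBasis {n : ℕ} {k : Type} [Field k] (J : Finset (MvPolynomial (Fin n) k))
    (I : Ideal (MvPolynomial (Fin n) k)) : Prop :=
  (↑J : Set (MvPolynomial (Fin n) k)) ⊆ (I : Set (MvPolynomial (Fin n) k)) ∧
    starIdeal I = Ideal.span (initialForm '' (↑J : Set (MvPolynomial (Fin n) k)))

/-- The ideal of a commutative ring generated by the images of the variables under the
quotient map; for `A/I` this is the distinguished (graded) maximal ideal `𝔪`. -/
def quotMax {n : ℕ} {k : Type} [Field k] (I : Ideal (MvPolynomial (Fin n) k)) :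
    Ideal (MvPolynomial (Fin n) k ⧸ I) :=
  Ideal.map (Ideal.Quotient.mk I) (Ideal.span (Set.range (MvPolynomial.X : Fin n → MvPolynomial (Fin n) k)))

/-- `J` is a reduction ideal of `I`: `J ⊆ I` and `J I^n = I^{n+1}` for all large `n`. -/
def IsReductionIdeal {R : Type} [CommRing R] (J I : Ideal R) : Prop :=
  J ≤ I ∧ ∃ N : ℕ, ∀ n ≥ N, J * I ^ n = I ^ (n + 1)

/-- A commutative ring `R` with distinguished (maximal) ideal `m` is Cohen–Macaulay if
there is a regular sequence on `R` consisting of elements of `m` whose length is the Krull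
dimension of `R`. -/
def IsCM (R : Type) [CommRing R] (m : Ideal R) : Prop :=
  ∃ rs : List R, (∀ x ∈ rs, x ∈ m) ∧ RingTheory.Sequence.IsRegular R rs ∧
    ringKrullDim R = rs.length

/-- The depth of `R` with respect to the ideal `m`: the supremum of the lengths of regular
sequences on `R` consisting of elements of `m`. -/
def ringDepth (R : Type) [CommRing R] (m : Ideal R) : ℕ∞ :=
  sSup ((fun rs : List R => (rs.length : ℕ∞)) ''
    { rs : List R | (∀ x ∈ rs, x ∈ m) ∧ RingTheory.Sequence.IsRegular R rs })

/-- The length of a module, realized as the Krull dimension of its lattice of submodules. -/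
def moduleLength (R M : Type) [CommRing R] [AddCommGroup M] [Module R M] : WithBot ℕ∞ :=
  Order.krullDim (Submodule R M)

/-- The `i`-th Betti number of the `R`-module `M` with respect to the distinguished maximal
ideal `m`, namely the length of `Tor_i^R(R/m, M)`. -/
def bettiNumber (R : Type) [CommRing R] (m : Ideal R) (M : Type) [AddCommGroup M] [Module R M]
    (i : ℕ) : WithBot ℕ∞ :=
  moduleLength R (((Tor (ModuleCat R) i).obj (ModuleCat.of R (R ⧸ m))).obj (ModuleCat.of R M))

/-- The height of an ideal. -/
def idealHeight {R : Type} [CommRing R] (I : Ideal R) : ℕ∞ :=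
  sInf { n : ℕ∞ | ∃ p : PrimeSpectrum R, I ≤ p.asIdeal ∧ n = Order.height p }

/-- The minimal number of generators of an ideal. -/
def mu {R : Type} [CommRing R] (I : Ideal R) : ℕ∞ :=
  sInf { n : ℕ∞ | ∃ s : Finset R, (s.card : ℕ∞) = n ∧ Ideal.span (↑s : Set R) = I }

/-- An ideal `I` of a polynomial ring is a complete intersection if its height equals its
minimal number of generators. -/
def IsCompleteIntersectionIdeal {R : Type} [CommRing R] (I : Ideal R) : Prop :=
  idealHeight I = mu I


/-- `p` is a factorization of `s` in terms of the generating family `g`. -/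
def FamFactorization {n d : ℕ} (g : Fin n → (Fin d → ℕ)) (p : Fin n → ℕ) (s : Fin d → ℕ) :
    Prop :=
  ∑ i, p i • g i = s

/-- `s` belongs to the affine semigroup generated by the family `g`. -/
def FamMem {n d : ℕ} (g : Fin n → (Fin d → ℕ)) (s : Fin d → ℕ) : Prop :=
  ∃ p, FamFactorization g p s

/-- `s` belongs to the Apéry set `AP(S,E)` of the semigroup generated by `g`, where the set of
extremal rays `E` consists of the first `d` members of the family. -/
def FamApery {d m : ℕ} (g : Fin (d + m) → (Fin d → ℕ)) (s : Fin d → ℕ) : Prop :=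
  FamMem g s ∧ ∀ i : Fin d, ¬ ∃ t, FamMem g t ∧ t + g (Fin.castAdd m i) = s

/-- The semigroup generated by `g` (first `d` members extremal rays) is homogeneous: every
nonzero element of the Apéry set with respect to the extremal rays has all its factorizations
of the same length. -/
def FamHomogeneous {d m : ℕ} (g : Fin (d + m) → (Fin d → ℕ)) : Prop :=
  ∀ s, FamApery g s → s ≠ 0 → ∀ p q, FamFactorization g p s → FamFactorization g q s →
    ∑ i, p i = ∑ i, q i

/-- `p` is a maximal factorization: no factorization of the same semigroup element has
strictly larger length (so the length of `p` is the order of the element). -/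
def IsMaximalFactorization {n d : ℕ} (g : Fin n → (Fin d → ℕ)) (p : Fin n → ℕ) : Prop :=
  ∀ q, FamFactorization g q (∑ i, p i • g i) → ∑ i, q i ≤ ∑ i, p i

/-- The projection `π_e` killing the `e` smallest variables `z_1, …, z_e`. -/
def proj (k : Type) [Field k] (n e : ℕ) :
    MvPolynomial (Fin n) k →ₐ[k] MvPolynomial (Fin (n - e)) k :=
  MvPolynomial.aeval fun j : Fin n =>
    if hj : e ≤ (j : ℕ) then
      MvPolynomial.X (⟨(j : ℕ) - e, by have := j.isLt; omega⟩ : Fin (n - e))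
    else 0

/-- The generating family of the extension `S_b = λS ∪ {μb}` of the semigroup generated by
`g`, where `b = Σ α_i g i`. -/
def extFam {d r : ℕ} (g : Fin (d + r) → (Fin d → ℕ)) (α : Fin (d + r) → ℕ) (lam mu : ℕ) :
    Fin (d + (r + 1)) → (Fin d → ℕ) :=
  Fin.snoc (fun i => lam • g i) (mu • ∑ i, α i • g i)

/-- Generating families of simplicial affine semigroups obtained from `ℕ^d` by a finite
sequence of nice extensions. -/
inductive NiceSeq (d : ℕ) : ∀ r : ℕ, (Fin (d + r) → (Fin d → ℕ)) → Prop
  | base : NiceSeq d 0 (fun i j => if (i : ℕ) = (j : ℕ) then 1 else 0)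
  | step {r : ℕ} {g : Fin (d + r) → (Fin d → ℕ)} (α : Fin (d + r) → ℕ) (lam mu : ℕ)
      (hg : NiceSeq d r g) (hco : Nat.Coprime lam mu) (hnice : lam ≤ ∑ i, α i) :
      NiceSeq d (r + 1) (extFam g α lam mu)


/-- The ideal of `A/I` generated by the images of the variables corresponding to the
extremal rays (the first `d` variables). -/
def quotExtremal (d r : ℕ) (k : Type) [Field k] (I : Ideal (MvPolynomial (Fin (d + r)) k)) :
    Ideal (MvPolynomial (Fin (d + r)) k ⧸ I) :=
  Ideal.map (Ideal.Quotient.mk I)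
    (Ideal.span (Set.range fun i : Fin d =>
      (MvPolynomial.X (Fin.castAdd r i) : MvPolynomial (Fin (d + r)) k)))

end AffineSG
/-- The defining ideal `𝔭` of the monomial curve given by the numerical semigroup minimally
generated by the geometric sequence `m_i = a^{r+1-i} b^{i-1}`, `i = 1, …, r+1`:
the kernel of `z_i ↦ t^{m_i}`. -/
noncomputable def geomKer (k : Type) [Field k] (a b r : ℕ) :
    Ideal (MvPolynomial (Fin (r + 1)) k) :=
  RingHom.ker (MvPolynomial.aeval
    (fun i : Fin (r + 1) =>
      (Polynomial.X : Polynomial k) ^ (a ^ (r - (i : ℕ)) * b ^ (i : ℕ))) :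
        MvPolynomial (Fin (r + 1)) k →ₐ[k] Polynomial k)

/-- The binomials `P_i = z_{i+1}^a − z_i^b`, `i = 1, …, r`. -/
noncomputable def geomP (k : Type) [Field k] (a b r : ℕ) (i : Fin r) :
    MvPolynomial (Fin (r + 1)) k :=
  MvPolynomial.X i.succ ^ a - MvPolynomial.X i.castSucc ^ b

namespace GeomAux
open AffineSG MvPolynomial

/-- Weight of variable `i`. -/
def mwt (a b r : ℕ) (i : Fin (r + 1)) : ℕ := a ^ (r - (i : ℕ)) * b ^ (i : ℕ)

/-- Weighted degree of an exponent vector. -/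
def gphi (a b r : ℕ) (u : Fin (r + 1) →₀ ℕ) : ℕ := ∑ i, u i * mwt a b r i

noncomputable instance lexPiLO {n : ℕ} : LinearOrder (Lex (Fin n → ℕ)) :=
  @Pi.Lex.linearOrder (Fin n) (fun _ => ℕ) _
    (inferInstance : WellFoundedLT (Fin n)) _

noncomputable instance keyLO {n : ℕ} : LinearOrder (Lex (ℕ × Lex (Fin n → ℕ))) :=
  @Prod.Lex.instLinearOrder _ _ _ lexPiLO

/-- A key into a linear order, antitone for `ndrlGT`. -/
def key {n : ℕ} (u : Fin n →₀ ℕ) : Lex (ℕ × Lex (Fin n → ℕ)) :=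
  toLex (edeg u, toLex (⇑u))

lemma edeg_eq {n : ℕ} (u : Fin n →₀ ℕ) : edeg u = ∑ i, u i :=
  Finsupp.sum_fintype _ _ fun _ => rfl

lemma key_injective {n : ℕ} : Function.Injective (key (n := n)) := by
  intro u v h
  have h2 : (⇑u : Fin n → ℕ) = ⇑v := congrArg (fun p => ofLex (ofLex p).2) h
  exact DFunLike.coe_injective h2

lemma pi_lex_lt {n : ℕ} (x y : Fin n → ℕ) :
    toLex x < toLex y ↔ ∃ i, (∀ j, j < i → x j = y j) ∧ x i < y i := Iff.rfl

lemma ndrlGT_iff {n : ℕ} (u v : Fin n →₀ ℕ) : ndrlGT u v ↔ key u < key v := by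
  have h : key u < key v ↔
      edeg u < edeg v ∨ (edeg u = edeg v ∧ toLex (⇑u) < toLex (⇑v)) :=
    Prod.Lex.lt_iff
  rw [ndrlGT, h]
  simp only [pi_lex_lt]
  constructor
  · rintro (h | ⟨h1, i, h2, h3⟩)
    · exact Or.inl h
    · exact Or.inr ⟨h1, i, h3, h2⟩
  · rintro (h | ⟨h1, i, h3, h2⟩)
    · exact Or.inl h
    · exact Or.inr ⟨h1, i, h2, h3⟩

lemma exists_isLM {n : ℕ} {k : Type} [Field k] (f : MvPolynomial (Fin n) k) (hf : f ≠ 0) :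
    ∃ m, IsLM f m := by
  obtain ⟨m, hm, hmin⟩ := Finset.exists_min_image f.support (key (n := n)) (support_nonempty.mpr hf)
  refine ⟨m, hm, fun m' hm' hne => ?_⟩
  rw [ndrlGT_iff]
  exact lt_of_le_of_ne (hmin m' hm') fun h => hne (key_injective h).symm

lemma isLM_unique {n : ℕ} {k : Type} [Field k] {f : MvPolynomial (Fin n) k}
    {m1 m2 : Fin n →₀ ℕ} (h1 : IsLM f m1) (h2 : IsLM f m2) : m1 = m2 := by
  by_contra hne
  have a1 := (ndrlGT_iff _ _).mp (h1.2 m2 h2.1 (Ne.symm hne))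
  have a2 := (ndrlGT_iff _ _).mp (h2.2 m1 h1.1 hne)
  exact absurd (a1.trans a2) (lt_irrefl _)

lemma one_le_mwt {a b r : ℕ} (ha : 0 < a) (hb : 0 < b) (i : Fin (r + 1)) :
    1 ≤ mwt a b r i := by
  have : 0 < a ^ (r - (i : ℕ)) := Nat.pow_pos ha
  have : 0 < b ^ (i : ℕ) := Nat.pow_pos hb
  exact Nat.mul_pos ‹_› ‹_›

lemma gphi_add {a b r : ℕ} (u w : Fin (r + 1) →₀ ℕ) :
    gphi a b r (u + w) = gphi a b r u + gphi a b r w := by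
  simp [gphi, Finsupp.add_apply, add_mul, Finset.sum_add_distrib]

lemma gphi_single {a b r : ℕ} (j : Fin (r + 1)) (c : ℕ) :
    gphi a b r (Finsupp.single j c) = c * mwt a b r j := by
  rw [gphi, Finset.sum_eq_single j]
  · rw [Finsupp.single_apply, if_pos rfl]
  · intro i _ hi
    rw [Finsupp.single_apply, if_neg (Ne.symm hi), zero_mul]
  · intro h; exact absurd (Finset.mem_univ j) h

lemma edeg_add {n : ℕ} (u w : Fin n →₀ ℕ) : edeg (u + w) = edeg u + edeg w := by
  simp [edeg_eq, Finsupp.add_apply, Finset.sum_add_distrib]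

lemma edeg_single {n : ℕ} (j : Fin n) (c : ℕ) : edeg (Finsupp.single j c) = c := by
  rw [edeg]; exact Finsupp.sum_single_index rfl

lemma edeg_le_gphi {a b r : ℕ} (ha : 0 < a) (hb : 0 < b) (u : Fin (r + 1) →₀ ℕ) :
    edeg u ≤ gphi a b r u := by
  rw [edeg_eq, gphi]
  refine Finset.sum_le_sum fun i _ => ?_
  calc u i = u i * 1 := (mul_one _).symm
  _ ≤ u i * mwt a b r i := Nat.mul_le_mul_left _ (one_le_mwt ha hb i)

lemma key_identity {a b r : ℕ} (i : Fin r) :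
    a * mwt a b r i.succ = b * mwt a b r i.castSucc := by
  have hi : (i : ℕ) < r := i.isLt
  simp only [mwt, Fin.val_succ, Fin.coe_castSucc]
  have h1 : r - (i : ℕ) = (r - ((i : ℕ) + 1)) + 1 := by omega
  rw [h1, pow_succ, pow_succ]; ring

lemma step {a b r : ℕ} (hab : a < b) (v : Fin (r + 1) →₀ ℕ) (i : Fin r)
    (hvi : a ≤ v i.succ) :
    ∃ v', gphi a b r v' = gphi a b r v ∧ edeg v' = edeg v + (b - a) := by
  set w : Fin (r + 1) →₀ ℕ := v - Finsupp.single i.succ a with hw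
  have hv : v = w + Finsupp.single i.succ a := by
    ext l
    simp only [hw, Finsupp.add_apply, Finsupp.tsub_apply, Finsupp.single_apply]
    by_cases hl : i.succ = l
    · subst hl; rw [if_pos rfl]; omega
    · rw [if_neg hl]; omega
  refine ⟨w + Finsupp.single i.castSucc b, ?_, ?_⟩
  · rw [gphi_add, gphi_single]
    conv_rhs => rw [hv, gphi_add, gphi_single]
    rw [key_identity i]
  · rw [edeg_add, edeg_single]
    conv_rhs => rw [hv, edeg_add, edeg_single]
    omega

lemma cancel_aux (a B e x y Au Av : ℕ) (hco : Nat.Coprime a B) (hx : x < a) (hy : y < a)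
    (hu : a ^ (e + 1) ∣ Au) (hv : a ^ (e + 1) ∣ Av)
    (heq : Au + x * (a ^ e * B) = Av + y * (a ^ e * B)) (hxy : y ≤ x) : x = y := by
  have ha : 0 < a := lt_of_le_of_lt (Nat.zero_le _) hx
  have hXY : y * (a ^ e * B) ≤ x * (a ^ e * B) := Nat.mul_le_mul_right _ hxy
  have hAuAv : Au ≤ Av ∧ x * (a ^ e * B) - y * (a ^ e * B) = Av - Au := by
    generalize x * (a ^ e * B) = X at *
    generalize y * (a ^ e * B) = Y at *
    omega
  have hdvd : a ^ (e + 1) ∣ (x - y) * (a ^ e * B) := by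
    rw [Nat.sub_mul, hAuAv.2]
    exact Nat.dvd_sub hv hu
  have hdvd2 : a ∣ (x - y) * B := by
    have hrw : (x - y) * (a ^ e * B) = a ^ e * ((x - y) * B) := by ring
    rw [hrw, pow_succ] at hdvd
    exact (Nat.mul_dvd_mul_iff_left (Nat.pow_pos ha : 0 < a ^ e)).mp hdvd
  have hdvd3 : a ∣ (x - y) := hco.dvd_of_dvd_mul_right hdvd2
  have := Nat.eq_zero_of_dvd_of_lt hdvd3 (by omega)
  omega

lemma reduced_unique {a b r : ℕ} (ha : 0 < a) (hco : Nat.Coprime a b)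
    {u v : Fin (r + 1) →₀ ℕ}
    (hu : ∀ i : Fin r, u i.succ < a) (hv : ∀ i : Fin r, v i.succ < a)
    (hphi : gphi a b r u = gphi a b r v) : u = v := by
  classical
  set U : ℕ → ℕ := fun t => if h : t < r + 1 then u ⟨t, h⟩ * mwt a b r ⟨t, h⟩ else 0 with hU
  set V : ℕ → ℕ := fun t => if h : t < r + 1 then v ⟨t, h⟩ * mwt a b r ⟨t, h⟩ else 0 with hV
  have hUu : gphi a b r u = ∑ t ∈ Finset.range (r + 1), U t := by
    rw [gphi, ← Fin.sum_univ_eq_sum_range]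
    refine Finset.sum_congr rfl fun i _ => ?_
    simp [hU, i.isLt, Nat.not_lt.mpr (Fin.is_le i)]
  have hVv : gphi a b r v = ∑ t ∈ Finset.range (r + 1), V t := by
    rw [gphi, ← Fin.sum_univ_eq_sum_range]
    refine Finset.sum_congr rfl fun i _ => ?_
    simp [hV, i.isLt, Nat.not_lt.mpr (Fin.is_le i)]
  have claim : ∀ s : ℕ, ∀ j : Fin (r + 1), r + 1 - s ≤ (j : ℕ) → u j = v j := by
    intro s
    induction s with
    | zero => intro j hj; exact absurd hj (by have := j.isLt; omega)
    | succ s ih =>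
      intro j hj
      by_cases hcase : r + 1 - s ≤ (j : ℕ)
      · exact ih j hcase
      · have hjt : (j : ℕ) = r - s := by omega
        have hsr : s ≤ r := by omega
        have htail : ∀ x, (j : ℕ) < x → ∀ hx : x < r + 1, U x = V x := by
          intro x hx1 hx2
          have := ih ⟨x, hx2⟩ (by simp only [Fin.val_mk]; omega)
          simp [hU, hV, hx2, this]
        have hsplit : ∀ W : ℕ → ℕ,
            ∑ x ∈ Finset.range (r + 1), W x =
              (∑ x ∈ Finset.Ico 0 (j : ℕ), W x) +
                (W (j : ℕ) + ∑ x ∈ Finset.Ico ((j : ℕ) + 1) (r + 1), W x) := by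
          intro W
          rw [Finset.range_eq_Ico,
            ← Finset.sum_Ico_consecutive W (Nat.zero_le (j : ℕ))
              (by have := j.isLt; omega : (j : ℕ) ≤ r + 1),
            Finset.sum_eq_sum_Ico_succ_bot (by have := j.isLt; omega : (j : ℕ) < r + 1)]
        have hT : ∑ x ∈ Finset.Ico ((j : ℕ) + 1) (r + 1), U x =
            ∑ x ∈ Finset.Ico ((j : ℕ) + 1) (r + 1), V x := by
          refine Finset.sum_congr rfl fun x hx => ?_
          rw [Finset.mem_Ico] at hx
          exact htail x (by omega) (by omega)
        have hmain : (∑ x ∈ Finset.Ico 0 (j : ℕ), U x) + U (j : ℕ) =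
            (∑ x ∈ Finset.Ico 0 (j : ℕ), V x) + V (j : ℕ) := by
          have h1 := hphi
          rw [hUu, hVv, hsplit U, hsplit V, hT] at h1
          omega
        have hUj : U (j : ℕ) = u j * (a ^ (r - (j : ℕ)) * b ^ (j : ℕ)) := by
          simp [hU, j.isLt, mwt, Nat.not_lt.mpr (Fin.is_le j)]
        have hVj : V (j : ℕ) = v j * (a ^ (r - (j : ℕ)) * b ^ (j : ℕ)) := by
          simp [hV, j.isLt, mwt, Nat.not_lt.mpr (Fin.is_le j)]
        by_cases h0 : (j : ℕ) = 0
        · -- heads are empty, cancel directly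
          rw [h0] at hmain
          simp only [Finset.Ico_self, Finset.sum_empty, zero_add] at hmain
          have hm0 : U 0 = V 0 → u j = v j := by
            rw [show (0 : ℕ) = (j : ℕ) from h0.symm, hUj, hVj]
            intro h
            have hpos : 0 < a ^ (r - (j : ℕ)) * b ^ (j : ℕ) := by
              rw [h0]; simp only [pow_zero, mul_one]
              exact Nat.pow_pos ha
            exact Nat.eq_of_mul_eq_mul_right hpos h
          exact hm0 hmain
        · -- j = i.succ for some i : Fin r
          have hjr : (j : ℕ) - 1 < r := by have := j.isLt; omega
          set i : Fin r := ⟨(j : ℕ) - 1, hjr⟩ with hi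
          have hisucc : i.succ = j := by
            apply Fin.ext; simp only [Fin.val_succ, hi]; omega
          have hua : u j < a := by rw [← hisucc]; exact hu i
          have hva : v j < a := by rw [← hisucc]; exact hv i
          -- divisibility of heads
          have hdvdU : a ^ (r - (j : ℕ) + 1) ∣ ∑ x ∈ Finset.Ico 0 (j : ℕ), U x := by
            refine Finset.dvd_sum fun x hx => ?_
            rw [Finset.mem_Ico] at hx
            have hxr : x < r + 1 := by have := j.isLt; omega
            have : U x = u ⟨x, hxr⟩ * (a ^ (r - x) * b ^ x) := by simp [hU, hxr, mwt, Nat.lt_succ_iff.mp hxr]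
            rw [this]
            exact Dvd.dvd.mul_left
              (Dvd.dvd.mul_right (pow_dvd_pow a (by omega)) _) _
          have hdvdV : a ^ (r - (j : ℕ) + 1) ∣ ∑ x ∈ Finset.Ico 0 (j : ℕ), V x := by
            refine Finset.dvd_sum fun x hx => ?_
            rw [Finset.mem_Ico] at hx
            have hxr : x < r + 1 := by have := j.isLt; omega
            have : V x = v ⟨x, hxr⟩ * (a ^ (r - x) * b ^ x) := by simp [hV, hxr, mwt, Nat.lt_succ_iff.mp hxr]
            rw [this]
            exact Dvd.dvd.mul_left
              (Dvd.dvd.mul_right (pow_dvd_pow a (by omega)) _) _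
          rw [hUj, hVj] at hmain
          have hcob : Nat.Coprime a (b ^ (j : ℕ)) := hco.pow_right _
          rcases le_total (v j) (u j) with hle | hle
          · exact cancel_aux a (b ^ (j : ℕ)) (r - (j : ℕ)) (u j) (v j) _ _
              hcob hua hva hdvdU hdvdV hmain hle
          · exact (cancel_aux a (b ^ (j : ℕ)) (r - (j : ℕ)) (v j) (u j) _ _
              hcob hva hua hdvdV hdvdU hmain.symm hle).symm
  ext j
  exact claim (r + 1) j (by omega)

lemma reduced_min {a b r : ℕ} (ha : 0 < a) (hab : a < b) (hco : Nat.Coprime a b)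
    {u : Fin (r + 1) →₀ ℕ} (hu : ∀ i : Fin r, u i.succ < a) :
    ∀ v, gphi a b r v = gphi a b r u → v ≠ u → key v < key u := by
  have hb : 0 < b := lt_trans ha hab
  have H : ∀ N : ℕ, ∀ v : Fin (r + 1) →₀ ℕ, gphi a b r u - edeg v = N →
      gphi a b r v = gphi a b r u → v ≠ u → key v < key u := by
    intro N
    induction N using Nat.strong_induction_on with
    | _ N ih =>
      intro v hN hphi hne
      by_cases hred : ∀ i : Fin r, v i.succ < a
      · exact absurd (reduced_unique ha hco hred hu hphi) hne
      · push_neg at hred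
        obtain ⟨i, hi⟩ := hred
        obtain ⟨v', hp, he⟩ := step hab v i hi
        have hlt : key v < key v' := by
          rw [← ndrlGT_iff]
          left; omega
        have hphin : gphi a b r v' = gphi a b r u := hp.trans hphi
        by_cases hv'u : v' = u
        · exact hv'u ▸ hlt
        · have hle : edeg v' ≤ gphi a b r u := hphin ▸ edeg_le_gphi ha hb v'
          have hev : edeg v ≤ gphi a b r u := hphi ▸ edeg_le_gphi ha hb v
          have := ih (gphi a b r u - edeg v') (by omega) v' rfl hphin hv'u
          exact hlt.trans this
  intro v hphi hne
  exact H (gphi a b r u - edeg v) v rfl hphi hne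

section WithField
variable {k : Type} [Field k] {a b r : ℕ}

lemma geomKer_mem (f : MvPolynomial (Fin (r + 1)) k) :
    f ∈ geomKer k a b r ↔
      (MvPolynomial.aeval fun i : Fin (r + 1) =>
        (Polynomial.X : Polynomial k) ^ mwt a b r i) f = 0 := by
  rw [geomKer]
  exact RingHom.mem_ker

lemma aeval_geom (f : MvPolynomial (Fin (r + 1)) k) :
    (MvPolynomial.aeval fun i : Fin (r + 1) =>
        (Polynomial.X : Polynomial k) ^ mwt a b r i) f =
      ∑ u ∈ f.support, Polynomial.C (MvPolynomial.coeff u f) *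
        Polynomial.X ^ gphi a b r u := by
  conv_lhs => rw [f.as_sum]
  rw [map_sum]
  refine Finset.sum_congr rfl fun u _ => ?_
  rw [aeval_monomial, Polynomial.algebraMap_eq]
  congr 1
  · rw [Finsupp.prod]
    simp_rw [← pow_mul]
    rw [Finset.prod_pow_eq_pow_sum]
    congr 1
    rw [gphi, ← Finset.sum_subset (Finset.subset_univ u.support)
      (fun x _ hx => by simp [Finsupp.notMem_support_iff.mp hx])]
    exact Finset.sum_congr rfl fun x _ => mul_comm _ _

lemma exists_same_gphi {f : MvPolynomial (Fin (r + 1)) k} (hf : f ∈ geomKer k a b r)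
    {u : Fin (r + 1) →₀ ℕ} (hu : u ∈ f.support) :
    ∃ v ∈ f.support, v ≠ u ∧ gphi a b r v = gphi a b r u := by
  classical
  have h0 := (geomKer_mem f).mp hf
  rw [aeval_geom] at h0
  have hc : ∑ v ∈ f.support,
      (if gphi a b r u = gphi a b r v then MvPolynomial.coeff v f else 0) = 0 := by
    have h1 := congrArg (fun p => Polynomial.coeff p (gphi a b r u)) h0
    simp only [Polynomial.finset_sum_coeff, Polynomial.coeff_zero] at h1
    calc ∑ v ∈ f.support,
          (if gphi a b r u = gphi a b r v then MvPolynomial.coeff v f else 0)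
        = ∑ v ∈ f.support, (Polynomial.C (MvPolynomial.coeff v f) *
            Polynomial.X ^ gphi a b r v).coeff (gphi a b r u) := by
          refine Finset.sum_congr rfl fun v _ => ?_
          rw [Polynomial.coeff_C_mul, Polynomial.coeff_X_pow, mul_ite, mul_one, mul_zero]
      _ = 0 := h1
  rw [← Finset.add_sum_erase _ _ hu, if_pos rfl] at hc
  have hcu : MvPolynomial.coeff u f ≠ 0 := MvPolynomial.mem_support_iff.mp hu
  have hsum : ∑ v ∈ f.support.erase u,
      (if gphi a b r u = gphi a b r v then MvPolynomial.coeff v f else 0) ≠ 0 := by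
    intro h; rw [h, add_zero] at hc; exact hcu hc
  obtain ⟨v, hv, hvne⟩ := Finset.exists_ne_zero_of_sum_ne_zero hsum
  refine ⟨v, Finset.mem_of_mem_erase hv, Finset.ne_of_mem_erase hv, ?_⟩
  by_contra hne
  rw [if_neg fun h => hne h.symm] at hvne
  exact hvne rfl

lemma s1_ne_s2 (ha : 0 < a) (i : Fin r) :
    (Finsupp.single i.succ a : Fin (r + 1) →₀ ℕ) ≠ Finsupp.single i.castSucc b := by
  intro h
  have h2 := DFunLike.congr_fun h i.succ
  rw [Finsupp.single_apply, if_pos rfl, Finsupp.single_apply,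
    if_neg (Fin.castSucc_lt_succ (i := i)).ne] at h2
  exact ha.ne' h2

lemma geomP_eq (i : Fin r) :
    geomP k a b r i =
      MvPolynomial.monomial (Finsupp.single i.succ a) (1 : k) -
        MvPolynomial.monomial (Finsupp.single i.castSucc b) 1 := by
  rw [geomP, MvPolynomial.X_pow_eq_monomial, MvPolynomial.X_pow_eq_monomial]

lemma coeff_geomP_s1 (ha : 0 < a) (i : Fin r) :
    MvPolynomial.coeff (Finsupp.single i.succ a) (geomP k a b r i) = 1 := by
  classical
  rw [geomP_eq, MvPolynomial.coeff_sub, MvPolynomial.coeff_monomial,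
    MvPolynomial.coeff_monomial, if_pos rfl, if_neg (s1_ne_s2 ha i).symm, sub_zero]

lemma isLM_geomP (ha : 0 < a) (hab : a < b) (i : Fin r) :
    IsLM (geomP k a b r i) (Finsupp.single i.succ a) := by
  classical
  constructor
  · rw [MvPolynomial.mem_support_iff, coeff_geomP_s1 ha]
    exact one_ne_zero
  · intro m' hm' hne
    have hm2 : m' = Finsupp.single i.castSucc b := by
      by_contra h2
      have hz : MvPolynomial.coeff m' (geomP k a b r i) = 0 := by
        rw [geomP_eq, MvPolynomial.coeff_sub, MvPolynomial.coeff_monomial,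
          MvPolynomial.coeff_monomial, if_neg fun h => hne h.symm,
          if_neg fun h => h2 h.symm, sub_zero]
      exact MvPolynomial.mem_support_iff.mp hm' hz
    subst hm2
    left
    rw [edeg_single, edeg_single]
    exact hab

lemma geomP_mem (i : Fin r) : geomP k a b r i ∈ geomKer k a b r := by
  rw [geomKer_mem, geomP, map_sub, map_pow, map_pow, MvPolynomial.aeval_X,
    MvPolynomial.aeval_X, ← pow_mul, ← pow_mul,
    show mwt a b r i.succ * a = mwt a b r i.castSucc * b by
      rw [mul_comm, mul_comm _ b]; exact key_identity i]
  exact sub_self _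

lemma lm_divisible (ha : 0 < a) (hab : a < b) (hco : Nat.Coprime a b)
    {f : MvPolynomial (Fin (r + 1)) k} (hf : f ∈ geomKer k a b r)
    {mf : Fin (r + 1) →₀ ℕ} (hlm : IsLM f mf) :
    ∃ i : Fin r, a ≤ mf i.succ := by
  by_contra h
  push_neg at h
  obtain ⟨v, hv, hvne, hvphi⟩ := exists_same_gphi hf hlm.1
  have h1 := (ndrlGT_iff _ _).mp (hlm.2 v hv hvne)
  have h2 := reduced_min ha hab hco h v hvphi hvne
  exact absurd (h1.trans h2) (lt_irrefl _)

end WithField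
end GeomAux

open AffineSG MvPolynomial in
/-- With respect to the negative degree reverse lexicographic order induced by
`z_{r+1} > ⋯ > z_1`, the set `G = {P_1, …, P_r}` with `P_i = z_{i+1}^a − z_i^b` is a minimal
Gröbner basis of the defining ideal `𝔭`; in particular `LM(P_i) = z_{i+1}^a`. -/
theorem geom_groebner_basis {k : Type} [Field k] (a b r : ℕ)
    [DecidableEq (MvPolynomial (Fin (r + 1)) k)]
    (ha : 0 < a) (hab : a < b) (hco : Nat.Coprime a b) (hr : 0 < r) :
    IsMinimalGroebnerBasis (Finset.image (geomP k a b r) Finset.univ) (geomKer k a b r) ∧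
      ∀ i : Fin r, IsLM (geomP k a b r i) (Finsupp.single i.succ a) := by
  classical
  have hLM : ∀ i : Fin r, IsLM (geomP k a b r i) (Finsupp.single i.succ a) :=
    fun i => GeomAux.isLM_geomP ha hab i
  refine ⟨⟨⟨?_, ?_⟩, ?_, ?_⟩, hLM⟩
  · -- G ⊆ I
    intro g hg
    simp only [Finset.coe_image, Finset.coe_univ, Set.image_univ, Set.mem_range] at hg
    obtain ⟨i, rfl⟩ := hg
    exact GeomAux.geomP_mem i
  · -- Gröbner basis condition
    intro f hf hf0
    obtain ⟨mf, hmf⟩ := GeomAux.exists_isLM f hf0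
    obtain ⟨i, hi⟩ := GeomAux.lm_divisible ha hab hco hf hmf
    exact ⟨geomP k a b r i, Finset.mem_image_of_mem _ (Finset.mem_univ i),
      Finsupp.single i.succ a, mf, hLM i, hmf, Finsupp.single_le_iff.mpr hi⟩
  · -- 0 ∉ G
    intro h0
    simp only [Finset.mem_image, Finset.mem_univ, true_and] at h0
    obtain ⟨i, hi⟩ := h0
    have hmem := (hLM i).1
    rw [hi] at hmem
    simp at hmem
  · -- minimality
    intro g hg g' hg' hne mg mg' hmg hmg' hle
    simp only [Finset.mem_image, Finset.mem_univ, true_and] at hg hg'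
    obtain ⟨i, rfl⟩ := hg
    obtain ⟨i', rfl⟩ := hg'
    have e1 : mg = Finsupp.single i.succ a := GeomAux.isLM_unique hmg (hLM i)
    have e2 : mg' = Finsupp.single i'.succ a := GeomAux.isLM_unique hmg' (hLM i')
    rw [e1, e2, Finsupp.single_le_iff] at hle
    have hss : i'.succ = i.succ := by
      by_contra hss
      rw [Finsupp.single_apply, if_neg hss] at hle
      omega
    exact hne (by rw [Fin.succ_injective _ hss])
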